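/- Let A be a noetherian projectively simple k-algebra and let B be any ℕ-graded k-algebra. Let M be a graded (B,A)-bimodule that is noetherian both as a left B-module and as a right A-module. If M is Goldie torsion as a right A-module, then dim_k M < ∞ (so M is a torsion right A-module). -/

import Mathlib

/-!
STATEMENT 5: Let `A` be a noetherian projectively simple `k`-algebra and `B` any
ℕ-graded `k`-algebra.  Let `M` be a graded `(B,A)`-bimodule that is noetherian as a left
`B`-module and as a right `A`-module.  If `M` is Goldie torsion as a right `A`-module,
then `dim_k M < ∞` (so `M` is a torsion right `A`-module).

Right `A`-modules are rendered as modules over `Aᵐᵒᵖ`; a right ideal of `A` is a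
`Submodule Aᵐᵒᵖ A`.  `M` Goldie torsion means: for every `x ∈ M` the right annihilator
of `x` is an essential right ideal, i.e. meets every nonzero right ideal nontrivially.
-/

open DirectSum MulOpposite in
theorem sum_homog_eq_zero {k M ι ι' : Type*} [Field k] [AddCommGroup M] [Module k M]
    [DecidableEq ι] (ℳ : ι → Submodule k M) [DirectSum.Decomposition ℳ]
    (s : Finset ι') (d : ι' → ι) (hd : ∀ j ∈ s, ∀ j' ∈ s, d j = d j' → j = j')
    (g : ι' → M) (hg : ∀ j ∈ s, g j ∈ ℳ (d j))
    (hsum : ∑ j ∈ s, g j = 0) : ∀ j0 ∈ s, g j0 = 0 := by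
  intro j0 hj0
  classical
  let π : M →+ M := ((ℳ (d j0)).subtype.toAddMonoidHom).comp
    ((DFinsupp.evalAddMonoidHom (d j0)).comp (decomposeAddEquiv ℳ).toAddMonoidHom)
  have hπ : ∀ y : M, π y = ((decompose ℳ y) (d j0) : M) := fun y => rfl
  have h := map_sum π g s
  rw [hsum, map_zero] at h
  have h2 : ∀ j ∈ s, π (g j) = if j = j0 then g j0 else 0 := by
    intro j hj
    rw [hπ]
    by_cases hjj : j = j0
    · subst hjj
      simp [decompose_of_mem_same ℳ (hg j hj)]
    · have : d j ≠ d j0 := fun hdd => hjj (hd j hj j0 hj0 hdd)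
      simp [hjj, decompose_of_mem_ne ℳ (hg j hj) this]
  rw [Finset.sum_congr rfl h2, Finset.sum_ite_eq' s j0 (fun _ => g j0), if_pos hj0] at h
  exact h.symm

/-- The underlying `k`-submodule of a two-sided ideal of a `k`-algebra. -/
def TwoSidedIdeal.ksub (k : Type*) {A : Type*} [CommSemiring k] [Ring A] [Algebra k A]
    (I : TwoSidedIdeal A) : Submodule k A where
  carrier := I
  add_mem' := fun ha hb => I.add_mem ha hb
  zero_mem' := I.zero_mem
  smul_mem' := fun c x hx => by
    rw [Algebra.smul_def]
    exact I.mul_mem_left _ _ hx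

/-- Projective simplicity of a locally finite ℕ-graded `k`-algebra. -/
def ProjectivelySimple (k : Type*) {A : Type*} [Field k] [Ring A] [Algebra k A]
    (𝒜 : ℕ → Submodule k A) [GradedAlgebra 𝒜] : Prop :=
  ¬ FiniteDimensional k A ∧
  ∀ I : TwoSidedIdeal A, I ≠ ⊥ →
    (∀ x ∈ I, ∀ n, (DirectSum.decompose 𝒜 x n : A) ∈ I) →
    FiniteDimensional k (A ⧸ I.ksub k)


theorem goldie_torsion_bimodule_finite_dimensional
    (k : Type*) [Field k]
    -- `A`: a noetherian (on both sides) projectively simple graded `k`-algebra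
    {A : Type*} [Ring A] [Algebra k A]
    (𝒜 : ℕ → Submodule k A) [GradedAlgebra 𝒜]
    (hlfA : ∀ n, FiniteDimensional k (𝒜 n))
    (hNoethA : IsNoetherianRing A) (hNoethAop : IsNoetherianRing Aᵐᵒᵖ)
    (hps : ProjectivelySimple k 𝒜)
    -- `B`: any ℕ-graded `k`-algebra
    {B : Type*} [Ring B] [Algebra k B]
    (ℬ : ℕ → Submodule k B) [GradedAlgebra ℬ]
    -- `M`: a graded `(B,A)`-bimodule
    {M : Type*} [AddCommGroup M] [Module k M]
    [Module B M] [IsScalarTower k B M]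
    [Module Aᵐᵒᵖ M] [IsScalarTower k Aᵐᵒᵖ M]
    [SMulCommClass B Aᵐᵒᵖ M]
    (ℳ : ℤ → Submodule k M) [DirectSum.Decomposition ℳ]
    (hBM : ∀ (i : ℕ) (n : ℤ), ∀ b ∈ ℬ i, ∀ x ∈ ℳ n, b • x ∈ ℳ ((i : ℤ) + n))
    (hMA : ∀ (n : ℤ) (j : ℕ), ∀ x ∈ ℳ n, ∀ a ∈ 𝒜 j, MulOpposite.op a • x ∈ ℳ (n + (j : ℤ)))
    -- noetherian on both sides
    (hNoethBM : IsNoetherian B M) (hNoethMA : IsNoetherian Aᵐᵒᵖ M)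
    -- Goldie torsion as a right `A`-module
    (hGoldie : ∀ x : M, ∀ J : Submodule Aᵐᵒᵖ A, J ≠ ⊥ →
        ∃ a : A, a ∈ J ∧ a ≠ 0 ∧ MulOpposite.op a • x = 0) :
    FiniteDimensional k M := by
  classical
  -- A is nontrivial
  rcases subsingleton_or_nontrivial A with hA | hA
  · refine absurd (⟨⟨∅, ?_⟩⟩ : FiniteDimensional k A) hps.1
    exact eq_top_iff.mpr fun x _ => by
      rw [Subsingleton.elim x 0]; exact Submodule.zero_mem _
  -- finitely many generators of M as a left B-module
  obtain ⟨S, hS⟩ := IsNoetherian.noetherian (⊤ : Submodule B M)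
  -- a nonzero element killing any finite set, inside any nonzero right ideal
  have key : ∀ s : Finset M, ∀ J : Submodule Aᵐᵒᵖ A, J ≠ ⊥ →
      ∃ a, a ∈ J ∧ a ≠ 0 ∧ ∀ x ∈ s, MulOpposite.op a • x = 0 := by
    intro s
    induction s using Finset.induction_on with
    | empty =>
      intro J hJ
      obtain ⟨a, haJ, ha0⟩ := Submodule.ne_bot_iff J |>.mp hJ
      exact ⟨a, haJ, ha0, fun x hx => absurd hx (Finset.notMem_empty x)⟩
    | @insert x s hx ih =>
      intro J hJ
      obtain ⟨a, haJ, ha0, hkill⟩ := ih J hJ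
      have hspan : Submodule.span Aᵐᵒᵖ {a} ≠ ⊥ := by
        rw [Submodule.ne_bot_iff]
        exact ⟨a, Submodule.mem_span_singleton_self a, ha0⟩
      obtain ⟨c, hc, hc0, hcx⟩ := hGoldie x _ hspan
      obtain ⟨r, rfl⟩ := Submodule.mem_span_singleton.mp hc
      refine ⟨r • a, J.smul_mem r haJ, hc0, ?_⟩
      intro y hy
      rcases Finset.mem_insert.mp hy with rfl | hy
      · exact hcx
      · have h1 : MulOpposite.op (r • a) • y
            = MulOpposite.op r.unop • (MulOpposite.op a • y) := by
          rw [← mul_smul, ← MulOpposite.op_mul, MulOpposite.smul_eq_mul_unop]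
        rw [h1, hkill y hy, smul_zero]
  obtain ⟨a, -, ha0, hkillS⟩ := key S ⊤ (by
    rw [Submodule.ne_bot_iff]
    exact ⟨1, trivial, one_ne_zero⟩)
  -- the annihilator two-sided ideal
  set C : Set A := {b : A | ∀ m : M, MulOpposite.op b • m = 0} with hC
  have hC0 : (0 : A) ∈ C := fun m => by simp
  have hCadd : ∀ {x y : A}, x ∈ C → y ∈ C → x + y ∈ C := fun hx hy m => by
    rw [MulOpposite.op_add, add_smul, hx m, hy m, add_zero]
  have hCneg : ∀ {x : A}, x ∈ C → -x ∈ C := fun hx m => by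
    rw [MulOpposite.op_neg, neg_smul, hx m, neg_zero]
  have hCmull : ∀ {x y : A}, y ∈ C → x * y ∈ C := fun {x y} hy m => by
    rw [MulOpposite.op_mul, mul_smul]
    exact hy _
  have hCmulr : ∀ {x y : A}, x ∈ C → x * y ∈ C := fun {x y} hx m => by
    rw [MulOpposite.op_mul, mul_smul, hx m, smul_zero]
  set I : TwoSidedIdeal A := TwoSidedIdeal.mk' C hC0 hCadd hCneg hCmull hCmulr with hI
  have hmemI : ∀ b : A, b ∈ I ↔ b ∈ C := fun b =>
    TwoSidedIdeal.mem_mk' C hC0 hCadd hCneg hCmull hCmulr b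
  -- `a` annihilates all of `M`
  have haC : a ∈ C := by
    intro m
    have hm : m ∈ Submodule.span B (S : Set M) := by rw [hS]; trivial
    refine Submodule.span_induction (fun y hy => hkillS y hy) (by simp) ?_ ?_ hm
    · intro u v _ _ hu hv
      rw [smul_add, hu, hv, add_zero]
    · intro b u _ hu
      rw [← smul_comm b (MulOpposite.op a) u, hu, smul_zero]
  have hIne : I ≠ ⊥ := by
    intro h
    have hmem : a ∈ (⊥ : TwoSidedIdeal A) := h ▸ (hmemI a).mpr haC
    rw [TwoSidedIdeal.mem_bot] at hmem
    exact ha0 hmem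
  -- `I` is graded
  have hgr : ∀ b ∈ I, ∀ n, (DirectSum.decompose 𝒜 b n : A) ∈ I := by
    intro b hb n
    rw [hmemI] at hb ⊢
    suffices h : ∀ (d : ℤ), ∀ m ∈ ℳ d, MulOpposite.op (DirectSum.decompose 𝒜 b n : A) • m = 0 by
      intro m
      rw [← DirectSum.sum_support_decompose ℳ m, Finset.smul_sum]
      exact Finset.sum_eq_zero fun d _ => h d _ (SetLike.coe_mem _)
    intro d m hm
    by_cases hn : n ∈ (DirectSum.decompose 𝒜 b).support
    · have hsum : ∑ j ∈ (DirectSum.decompose 𝒜 b).support,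
          MulOpposite.op (DirectSum.decompose 𝒜 b j : A) • m = 0 := by
        have : ∑ j ∈ (DirectSum.decompose 𝒜 b).support,
            MulOpposite.op (DirectSum.decompose 𝒜 b j : A) = MulOpposite.op b := by
          have h3 := map_sum (MulOpposite.opAddEquiv (α := A))
            (fun j => (DirectSum.decompose 𝒜 b j : A)) (DirectSum.decompose 𝒜 b).support
          simp only [MulOpposite.opAddEquiv_apply] at h3
          rw [← h3, DirectSum.sum_support_decompose 𝒜 b]
        rw [← Finset.sum_smul, this, hb m]
      exact sum_homog_eq_zero ℳ (DirectSum.decompose 𝒜 b).support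
        (fun j => d + (j : ℤ))
        (fun j _ j' _ hjj => by exact_mod_cast add_left_cancel hjj)
        _ (fun j _ => hMA d j m hm _ (SetLike.coe_mem _)) hsum n hn
    · rw [DFinsupp.notMem_support_iff.mp hn]
      simp
  haveI hfinQ : FiniteDimensional k (A ⧸ I.ksub k) := hps.2 I hIne hgr
  -- finitely many generators of M as a right A-module
  obtain ⟨T, hT⟩ := IsNoetherian.noetherian (⊤ : Submodule Aᵐᵒᵖ M)
  -- for each generator, the k-linear "orbit" map
  let f : M → (A →ₗ[k] M) := fun x =>
    { toFun := fun b => MulOpposite.op b • x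
      map_add' := fun b c => by
        show MulOpposite.op (b + c) • x = MulOpposite.op b • x + MulOpposite.op c • x
        rw [MulOpposite.op_add, add_smul]
      map_smul' := fun c b => by
        show MulOpposite.op (c • b) • x = c • (MulOpposite.op b • x)
        rw [MulOpposite.op_smul, smul_assoc] }
  have hker : ∀ x : M, I.ksub k ≤ LinearMap.ker (f x) := by
    intro x b hb
    exact ((hmemI b).mp hb) x
  haveI hfd : ∀ x : M, FiniteDimensional k (LinearMap.range (f x)) := by
    intro x
    have : LinearMap.range (f x)
        = LinearMap.range ((I.ksub k).liftQ (f x) (hker x)) := by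
      conv_lhs => rw [← Submodule.liftQ_mkQ (I.ksub k) (f x) (hker x)]
      rw [LinearMap.range_comp, Submodule.range_mkQ, Submodule.map_top]
    rw [this]
    infer_instance
  set P : Submodule k M := ⨆ x : (T : Set M), LinearMap.range (f x) with hP
  haveI : FiniteDimensional k P := Submodule.finiteDimensional_iSup _
  have hPtop : ∀ m : M, m ∈ P := by
    intro m
    have hm : m ∈ Submodule.span Aᵐᵒᵖ (T : Set M) := by rw [hT]; trivial
    refine Submodule.span_induction ?_ (Submodule.zero_mem P) ?_ ?_ hm
    · intro y hy
      refine le_iSup (fun x : (T : Set M) => LinearMap.range (f x)) ⟨y, hy⟩ ⟨1, ?_⟩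
      simp [f]
    · intro u v _ _ hu hv
      exact P.add_mem hu hv
    · intro r u _ hu
      refine Submodule.iSup_induction (motive := fun z => r • z ∈ P) _ hu ?_ (by simp) ?_
      · rintro x z ⟨b, rfl⟩
        have h1 : r • (f x) b = (f x) (b * r.unop) := by
          show r • (MulOpposite.op b • (x : M)) = MulOpposite.op (b * r.unop) • (x : M)
          rw [← mul_smul, MulOpposite.op_mul, MulOpposite.op_unop]
        rw [h1]
        exact le_iSup (fun x : (T : Set M) => LinearMap.range (f x)) x ⟨b * r.unop, rfl⟩
      · intro z w hz hw
        rw [smul_add]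
        exact P.add_mem hz hw
  have hPeq : P = ⊤ := eq_top_iff.mpr fun m _ => hPtop m
  have : FiniteDimensional k (⊤ : Submodule k M) := hPeq ▸ inferInstance
  exact Submodule.topEquiv.finiteDimensional
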